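/- Let n, k be positive integers, a : Fin k → ℝ with a(i) > 0 for all i, and A : Fin k → ℝ^n points such that ‖A(i)‖_1 = a(i) for every i and d_1(A(i), A(j)) = a(i) + a(j) for all i ≠ j. Then k ≤ 2n. (In particular, a metric star tree with more than 2n leaves cannot be isometrically embedded into (ℝ^n, d_1).) -/

import Mathlib

/-- If `A i` are points of `(ℝ^n, d_1)` with `‖A i‖_1 = a i > 0` and
`d_1(A i, A j) = a i + a j` for `i ≠ j` (the images of the leaves of a star tree
under an isometric embedding sending the center to the origin), then `k ≤ 2n`. -/
theorem star_tree_leaves_le_two_mul_of_embed_l1 (n k : ℕ) (hn : 0 < n) (hk : 0 < k)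
    (a : Fin k → ℝ) (ha : ∀ i, 0 < a i) (A : Fin k → PiLp 1 (fun _ : Fin n => ℝ))
    (hnorm : ∀ i, ‖A i‖ = a i)
    (hdist : ∀ i j : Fin k, i ≠ j → dist (A i) (A j) = a i + a j) :
    k ≤ 2 * n := by
  have hnorm' : ∀ i, ∑ c, |A i c| = a i := by
    intro i
    rw [← hnorm i]
    simp [PiLp.norm_eq_sum (p := 1) (by norm_num), Real.norm_eq_abs]
  have hdist' : ∀ i j, i ≠ j → ∑ c, |A i c - A j c| = ∑ c, (|A i c| + |A j c|) := by
    intro i j hij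
    have := hdist i j hij
    simp [PiLp.dist_eq_sum (p := 1) (by norm_num), Real.dist_eq] at this
    rw [this, Finset.sum_add_distrib, hnorm' i, hnorm' j]
  -- coordinatewise equality
  have key : ∀ i j, i ≠ j → ∀ c, A i c * A j c ≤ 0 := by
    intro i j hij c
    have heq : ∀ c ∈ Finset.univ, |A i c - A j c| = |A i c| + |A j c| := by
      apply Finset.sum_eq_sum_iff_of_le (fun c _ => abs_sub _ _) |>.mp
      exact (hdist' i j hij).symm ▸ rfl
    have h := heq c (Finset.mem_univ c)
    rcases abs_cases (A i c) with ⟨e1, s1⟩ | ⟨e1, s1⟩ <;>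
      rcases abs_cases (A j c) with ⟨e2, s2⟩ | ⟨e2, s2⟩ <;>
      rcases abs_cases (A i c - A j c) with ⟨e3, s3⟩ | ⟨e3, s3⟩ <;>
      nlinarith
  -- build injection Fin k → Fin n × Bool
  have hex : ∀ i : Fin k, ∃ c, A i c ≠ 0 := by
    intro i
    by_contra h
    push_neg at h
    have : ∑ c, |A i c| = 0 := by simp [h]
    rw [hnorm' i] at this
    exact absurd this (ne_of_gt (ha i))
  choose c hc using hex
  have hinj : Function.Injective (fun i => (c i, decide (0 < A i (c i)))) := by
    intro i j h
    by_contra hij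
    simp only [Prod.mk.injEq, decide_eq_decide] at h
    obtain ⟨h1, h2⟩ := h
    rw [← h1] at h2
    have hkey := key i j hij (c i)
    have hci := hc i
    have hcj : A j (c i) ≠ 0 := by rw [h1]; exact hc j
    rcases lt_or_gt_of_ne hci with hi | hi
    · have hnp : ¬ 0 < A j (c i) := fun hp => absurd (h2.mpr hp) (not_lt.mpr hi.le)
      have hj : A j (c i) < 0 := lt_of_le_of_ne (not_lt.mp hnp) hcj
      nlinarith
    · have hj := h2.mp hi
      nlinarith
  calc k = Fintype.card (Fin k) := (Fintype.card_fin k).symm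
    _ ≤ Fintype.card (Fin n × Bool) := Fintype.card_le_of_injective _ hinj
    _ = 2 * n := by simp [Fintype.card_prod, mul_comm]
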